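/- Let Σ be a finite alphabet with |Σ| = σ ≥ 2 and let w be a word over Σ with alph(w) = Σ and |w| > ι(w)·σ. Then there exists a word w' over Σ with ι(w') = ι(w) and |w'| = ι(w)·σ such that for all k ∈ [|w|], |ScatFact_k(w')| ≤ |ScatFact_k(w)|. -/

import Mathlib

open List

universe u
variable {α : Type u}

/-- `ScatFact k w` is the set of scattered factors (subsequences) of `w` of length exactly `k`. -/
def ScatFact (k : ℕ) (w : List α) : Set (List α) :=
  {v | v.length = k ∧ v.Sublist w}

/-- `w` is `k`-universal over the alphabet `S`: every word of length `k` over `S`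
is a scattered factor of `w`. -/
def IsKUniversal [DecidableEq α] (S : Finset α) (k : ℕ) (w : List α) : Prop :=
  ∀ v : List α, v.length = k → (∀ x ∈ v, x ∈ S) → v.Sublist w

/-- The universality index of `w` over the alphabet `S`: the largest `k` such that
`w` is `k`-universal over `S`. -/
noncomputable def univIdx [DecidableEq α] (S : Finset α) (w : List α) : ℕ :=
  sSup {k | IsKUniversal S k w}

/-- `IsArchFact S w inners modus rest` says that `w` has the arch factorization
`w = ar_1 ⋯ ar_n · rest` over the alphabet `S`, where the `i`-th arch is
`ar_i = inners[i] ++ [modus[i]]`: each arch contains every letter of `S`,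
the last letter of each arch occurs only once within the arch, and the
alphabet of the rest is a proper subset of `S`. -/
def IsArchFact [DecidableEq α] (S : Finset α) (w : List α)
    (inners : List (List α)) (modus : List α) (rest : List α) : Prop :=
  inners.length = modus.length ∧
  w = (List.zipWith (fun inn m => inn ++ [m]) inners modus).flatten ++ rest ∧
  (∀ p ∈ List.zip inners modus, ∀ x ∈ S, x ∈ p.1 ++ [p.2]) ∧
  (∀ p ∈ List.zip inners modus, p.2 ∉ p.1) ∧
  rest.toFinset ⊂ S

/-- `v` is perfect `k`-universal over `S`: `alph(v) = S`, the universality index of `v`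
over `S` is `k`, and the rest of its arch factorization over `S` is empty. -/
def IsPerfectUniv [DecidableEq α] (S : Finset α) (k : ℕ) (v : List α) : Prop :=
  v.toFinset = S ∧ univIdx S v = k ∧ ∃ inners modus, IsArchFact S v inners modus []

/-- `v` is minimal perfect `k`-universal over `S`. -/
def IsMinPerfectUniv [DecidableEq α] (S : Finset α) (k : ℕ) (v : List α) : Prop :=
  IsPerfectUniv S k v ∧ ∀ v' : List α, IsPerfectUniv S k v' → v.length ≤ v'.length

/-- `nextAlphPos w i s` (positions `1`-indexed): the least position `j` such that
`w[i+1..j]` contains exactly `s` distinct letters, or `none` (representing `-1`)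
if `w[i+1..|w|]` contains fewer than `s` distinct letters. -/
noncomputable def nextAlphPos [DecidableEq α] (w : List α) (i s : ℕ) : Option ℕ :=
  if (w.drop i).toFinset.card < s then none
  else some (sInf {j | ((w.drop i).take (j - i)).toFinset.card = s})

/-- The letter of `w` at (1-indexed) position `j`. -/
def letterAt [Inhabited α] (w : List α) (j : ℕ) : α := w.getD (j - 1) default

/-- The word over `Fin σ` with `ι` arches, whose first arch is `a_1 a_2 ⋯ a_σ`
and each later arch is the reverse of the previous one. -/
def wmin (σ ι : ℕ) : List (Fin σ) :=
  ((List.range ι).map (fun i =>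
    if i % 2 = 0 then List.finRange σ else (List.finRange σ).reverse)).flatten

lemma my_cons_sublist_of_not_mem {c : α} {v l₁ l₂ : List α}
    (h : (c :: v).Sublist (l₁ ++ l₂)) (hc : c ∉ l₁) : (c :: v).Sublist l₂ := by
  induction l₁ with
  | nil => simpa using h
  | cons x t ih =>
    cases h with
    | cons _ h' => exact ih h' (fun hm => hc (List.mem_cons_of_mem _ hm))
    | cons_cons _ h' => exact absurd List.mem_cons_self hc

lemma my_extract [Fintype α] [DecidableEq α] [Nonempty α] :
    ∀ (n : ℕ) (w : List α), IsKUniversal Finset.univ n w →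
      ∃ u : List α, u.Sublist w ∧ u.length = n * Fintype.card α ∧
        IsKUniversal Finset.univ n u := by
  intro n
  induction n with
  | zero =>
    intro w _
    refine ⟨[], List.nil_sublist w, by simp, fun v hv _ => ?_⟩
    rw [List.length_eq_zero_iff] at hv
    simp [hv]
  | succ n ih =>
    intro w h
    classical
    have hall : ∀ a : α, a ∈ w := by
      intro a
      have := h (List.replicate (n+1) a) (by simp) (by simp)
      exact this.subset (by simp)
    have hP : (w.take w.length).toFinset = Finset.univ := by
      rw [List.take_length]; ext x; simp [hall]
    have hex : ∃ m, (w.take m).toFinset = Finset.univ := ⟨w.length, hP⟩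
    set m := Nat.find hex with hm
    have hPm : (w.take m).toFinset = Finset.univ := Nat.find_spec hex
    have hmle : m ≤ w.length := Nat.find_min' hex hP
    have hm1 : 1 ≤ m := by
      rcases Nat.eq_zero_or_pos m with h0 | h1
      · exfalso
        rw [h0] at hPm
        simp at hPm
        obtain ⟨a⟩ := ‹Nonempty α›
        have : a ∈ (∅ : Finset α) := hPm ▸ Finset.mem_univ a
        simp at this
      · exact h1
    have hlt : m - 1 < w.length := lt_of_lt_of_le (Nat.sub_lt hm1 one_pos) hmle
    set c := w.get ⟨m - 1, hlt⟩ with hc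
    have htake : w.take (m-1) ++ [c] = w.take m := by
      have := List.take_concat_get hlt
      rw [List.concat_eq_append, Nat.sub_add_cancel hm1] at this
      exact this
    have hmiss : c ∉ w.take (m-1) := by
      intro hmem
      have : (w.take (m-1)).toFinset = Finset.univ := by
        ext x
        simp only [Finset.mem_univ, iff_true]
        have hx : x ∈ w.take m := by
          rw [← List.mem_toFinset, hPm]; exact Finset.mem_univ x
        rw [← htake, List.mem_append] at hx
        rcases hx with hx | hx
        · exact List.mem_toFinset.mpr hx
        · simp at hx; rw [hx]; exact List.mem_toFinset.mpr hmem
      exact Nat.find_min hex (Nat.sub_lt hm1 one_pos) this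
    have hsplit : w = w.take (m-1) ++ (c :: w.drop m) := by
      conv_lhs => rw [← List.take_append_drop m w]
      rw [← htake, List.append_assoc]
      rfl
    have hb : IsKUniversal Finset.univ n (w.drop m) := by
      intro v hv _
      have hcv : (c :: v).Sublist w := h (c :: v) (by simp [hv]) (by simp)
      rw [hsplit] at hcv
      have := my_cons_sublist_of_not_mem hcv hmiss
      exact (List.cons_sublist_cons).mp this
    obtain ⟨u', hu'sub, hu'len, hu'univ⟩ := ih (w.drop m) hb
    refine ⟨(w.take m).dedup ++ u', ?_, ?_, ?_⟩
    · conv_rhs => rw [← List.take_append_drop m w]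
      exact List.Sublist.append (List.dedup_sublist _) hu'sub
    · have : (w.take m).dedup.length = Fintype.card α := by
        have hn : (w.take m).dedup.Nodup := List.nodup_dedup _
        have := List.toFinset_card_of_nodup hn
        have he : (w.take m).dedup.toFinset = (w.take m).toFinset := by
          ext y; simp [List.mem_dedup]
        rw [he, hPm] at this
        rw [← this]
        exact Finset.card_univ
      simp [this, hu'len]; ring
    · intro v hv _
      rcases v with _ | ⟨x, v'⟩
      · simp at hv
      · simp only [List.length_cons, Nat.succ_inj] at hv
        have hx : x ∈ (w.take m).dedup := by
          rw [List.mem_dedup, ← List.mem_toFinset, hPm]; exact Finset.mem_univ x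
        have h1 : [x].Sublist (w.take m).dedup := List.singleton_sublist.mpr hx
        have h2 := hu'univ v' hv (by simp)
        have := List.Sublist.append h1 h2
        simpa using this

lemma my_zero_univ [Fintype α] [DecidableEq α] (w : List α) :
    IsKUniversal (Finset.univ : Finset α) 0 w := by
  intro v hv _
  rw [List.length_eq_zero_iff] at hv
  simp [hv]

lemma my_bdd [Fintype α] [DecidableEq α] [Nonempty α] (w : List α) :
    ∀ k ∈ {k | IsKUniversal (Finset.univ : Finset α) k w}, k ≤ w.length := by
  intro k hk
  obtain ⟨a⟩ := ‹Nonempty α›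
  have := hk (List.replicate k a) (by simp) (by simp)
  have := this.length_le
  simpa using this


theorem stmt14 {α : Type u} [Fintype α] [DecidableEq α]
    (hsigma : 2 ≤ Fintype.card α) (w : List α) (halph : ∀ a : α, a ∈ w)
    (hlen : univIdx Finset.univ w * Fintype.card α < w.length) :
    ∃ w' : List α, univIdx Finset.univ w' = univIdx Finset.univ w ∧
      w'.length = univIdx Finset.univ w * Fintype.card α ∧
      ∀ k : ℕ, 1 ≤ k → k ≤ w.length →
        (ScatFact k w').ncard ≤ (ScatFact k w).ncard := by
  have : Nonempty α := Fintype.card_pos_iff.mp (by omega)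
  set ι := univIdx Finset.univ w with hι
  have hne : {k | IsKUniversal (Finset.univ : Finset α) k w}.Nonempty :=
    ⟨0, my_zero_univ w⟩
  have hbdd : BddAbove {k | IsKUniversal (Finset.univ : Finset α) k w} :=
    ⟨w.length, my_bdd w⟩
  have hmem : IsKUniversal Finset.univ ι w := Nat.sSup_mem hne hbdd
  obtain ⟨u, husub, hulen, huuniv⟩ := my_extract ι w hmem
  refine ⟨u, ?_, hulen, ?_⟩
  · -- univIdx of u is ι
    apply _root_.le_antisymm
    · show sSup {k | IsKUniversal (Finset.univ : Finset α) k u} ≤ ι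
      refine csSup_le ⟨0, my_zero_univ u⟩ ?_
      intro k hk
      have hkw : IsKUniversal Finset.univ k w := fun v hv hv2 =>
        (hk v hv hv2).trans husub
      exact le_csSup hbdd hkw
    · show ι ≤ sSup {k | IsKUniversal (Finset.univ : Finset α) k u}
      exact le_csSup ⟨u.length, my_bdd u⟩ huuniv
  · intro k _ _
    have hsub : ScatFact k u ⊆ ScatFact k w := by
      intro v hv
      exact ⟨hv.1, hv.2.trans husub⟩
    have hfin : (ScatFact k w).Finite := by
      apply Set.Finite.subset (w.sublists.toFinset).finite_toSet
      intro v hv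
      simp only [Finset.mem_coe, List.mem_toFinset, List.mem_sublists]
      exact hv.2
    exact Set.ncard_le_ncard hsub hfin
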